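/- Let d ≥ 1, let Φ : (0,∞) → (0,∞) be nondecreasing with Φ(λ) ≥ C₁ λ^{α/2} for 0 < λ < λ₀ (for some α ∈ (0,2], C₁ > 0, λ₀ > 0) and Φ(λ)/log λ → ∞ as λ → ∞, and for each t > 0 let η_t be a Borel measure on (0,∞) with ∫_{(0,∞)} e^{-λu} η_t(du) = e^{-tΦ(λ)} for all λ > 0. Define the subordinated kernel p_t(x) = ∫_{(0,∞)} (4πu)^{-d/2} e^{-|x|²/(4u)} η_t(du). Then for every t₀ > 0 there exists C = C(t₀) > 0 such that p_t(x) ≤ C t^{-d/α} for all x ∈ ℝ^d and all t ≥ t₀. -/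

import Mathlib

open MeasureTheory Filter Set Topology

open scoped ENNReal
set_option maxHeartbeats 1000000


lemma lint_eq_of_int {f : ℝ → ℝ} {s : Set ℝ} (hs : MeasurableSet s)
    (hf : ∀ x ∈ s, 0 ≤ f x) {c : ℝ} (hc : 0 < c) (h : ∫ x in s, f x = c) :
    ∫⁻ x in s, ENNReal.ofReal (f x) = ENNReal.ofReal c := by
  have hint : IntegrableOn f s := by
    by_contra h'
    rw [MeasureTheory.integral_undef h'] at h
    exact hc.ne' h.symm
  rw [← h]
  exact (ofReal_integral_eq_lintegral_ofReal hint
    ((ae_restrict_iff' hs).2 (ae_of_all _ hf))).symm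

lemma exp_le_rpow_aux {s c t : ℝ} (hs : 0 < s) (hc : 0 < c) (ht : 0 < t) :
    Real.exp (-(c*t)) ≤ Real.exp (s * Real.log (2*s/c)) * t ^ (-s) := by
  rw [Real.rpow_def_of_pos ht, ← Real.exp_add]
  apply Real.exp_le_exp.2
  have h0 : (0:ℝ) < c*t/(2*s) := by positivity
  have h1 : Real.log t = Real.log (c*t/(2*s)) + Real.log (2*s/c) := by
    rw [← Real.log_mul (ne_of_gt h0) (by positivity)]
    congr 1
    field_simp
  have h2 : Real.log (c*t/(2*s)) ≤ c*t/(2*s) :=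
    (Real.log_le_sub_one_of_pos h0).trans (by linarith)
  have h3 : s * Real.log t ≤ c*t/2 + s * Real.log (2*s/c) := by
    rw [h1, mul_add]
    have h4 := mul_le_mul_of_nonneg_left h2 hs.le
    have h5 : s * (c*t/(2*s)) = c*t/2 := by field_simp
    linarith
  nlinarith

lemma lint_gamma {s u : ℝ} (hs : 0 < s) (hu : 0 < u) :
    ∫⁻ l in Ioi (0:ℝ), ENNReal.ofReal (l ^ (s-1) * Real.exp (-(u*l)))
      = ENNReal.ofReal ((1/u)^s * Real.Gamma s) := by
  apply lint_eq_of_int measurableSet_Ioi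
    (fun x hx => by have : (0:ℝ) < x := hx; positivity)
    (by have := Real.Gamma_pos_of_pos hs; positivity)
  exact Real.integral_rpow_mul_exp_neg_mul_Ioi hs hu

lemma lint_gamma2 {p q b : ℝ} (hp : 0 < p) (hq : -1 < q) (hb : 0 < b) :
    ∫⁻ x in Ioi (0:ℝ), ENNReal.ofReal (x ^ q * Real.exp (-b * x ^ p))
      = ENNReal.ofReal (b ^ (-(q + 1) / p) * (1 / p) * Real.Gamma ((q + 1) / p)) := by
  apply lint_eq_of_int measurableSet_Ioi
    (fun x hx => by have : (0:ℝ) < x := hx; positivity)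
    (by have := Real.Gamma_pos_of_pos (show 0 < (q+1)/p from div_pos (by linarith) hp); positivity)
  exact integral_rpow_mul_exp_neg_mul_rpow hp hq hb

lemma lint_rpow_tail {c : ℝ} (hc : 0 < c) :
    ∫⁻ x in Ioi c, ENNReal.ofReal (x ^ (-3:ℝ)) = ENNReal.ofReal (c ^ (-2:ℝ)/2) := by
  apply lint_eq_of_int measurableSet_Ioi
    (fun x hx => by have : (0:ℝ) < x := hc.trans hx; positivity)
    (by positivity)
  rw [integral_Ioi_rpow_of_lt (by norm_num) hc]
  norm_num


lemma mass_le_one {t : ℝ} (ht : 0 < t) {Φ : ℝ → ℝ} (hpos : ∀ l > (0:ℝ), 0 < Φ l)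
    {μ0 : Measure ℝ}
    (hlap : ∀ l > (0:ℝ), ∫⁻ u in Ioi (0:ℝ), ENNReal.ofReal (Real.exp (-l * u)) ∂μ0
      = ENNReal.ofReal (Real.exp (-t * Φ l))) :
    μ0 (Ioi 0) ≤ 1 := by
  have hle : ∫⁻ _ in Ioi (0:ℝ), (1:ℝ≥0∞) ∂μ0 ≤ 1 := by
    have hcong : ∀ u ∈ Ioi (0:ℝ), (1:ℝ≥0∞)
        = liminf (fun n : ℕ => ENNReal.ofReal (Real.exp (-(1/(n+1):ℝ) * u))) atTop := by
      intro u _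
      have h0 : Tendsto (fun n : ℕ => (1/(n+1):ℝ)) atTop (𝓝 0) :=
        tendsto_one_div_add_atTop_nhds_zero_nat
      have h1 : Tendsto (fun n : ℕ => -(1/(n+1):ℝ) * u) atTop (𝓝 0) := by
        simpa using (h0.neg.mul_const u)
      have htend : Tendsto (fun n : ℕ => ENNReal.ofReal (Real.exp (-(1/(n+1):ℝ) * u)))
          atTop (𝓝 1) := by
        have := (ENNReal.continuous_ofReal.tendsto _).comp
          ((Real.continuous_exp.tendsto _).comp h1)
        simpa [Function.comp_def] using this
      exact htend.liminf_eq.symm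
    rw [setLIntegral_congr_fun measurableSet_Ioi hcong]
    calc ∫⁻ u in Ioi (0:ℝ),
        liminf (fun n : ℕ => ENNReal.ofReal (Real.exp (-(1/(n+1):ℝ) * u))) atTop ∂μ0
        ≤ liminf (fun n : ℕ =>
            ∫⁻ u in Ioi (0:ℝ), ENNReal.ofReal (Real.exp (-(1/(n+1):ℝ) * u)) ∂μ0) atTop :=
          lintegral_liminf_le (fun n => by fun_prop)
      _ ≤ liminf (fun _ : ℕ => (1:ℝ≥0∞)) atTop := by
          refine Filter.liminf_le_liminf (Filter.Eventually.of_forall fun n => ?_)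
          rw [hlap _ (by positivity)]
          refine ENNReal.ofReal_le_one.2 (Real.exp_le_one_iff.2 ?_)
          have := hpos (1/(n+1):ℝ) (by positivity)
          nlinarith
      _ = 1 := Filter.liminf_const 1
  rwa [setLIntegral_one] at hle

lemma key_swap {t : ℝ} {Φ : ℝ → ℝ} {μ : Measure ℝ} [IsFiniteMeasure μ] {s : ℝ} (hs : 0 < s)
    (hsupp : ∀ᵐ u ∂μ, u ∈ Ioi (0:ℝ))
    (hlap' : ∀ l > (0:ℝ), ∫⁻ u, ENNReal.ofReal (Real.exp (-l * u)) ∂μ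
      = ENNReal.ofReal (Real.exp (-t * Φ l))) :
    ENNReal.ofReal (Real.Gamma s) * ∫⁻ u, ENNReal.ofReal (u ^ (-s)) ∂μ
      = ∫⁻ l in Ioi (0:ℝ), ENNReal.ofReal (l ^ (s-1) * Real.exp (-t * Φ l)) := by
  calc ENNReal.ofReal (Real.Gamma s) * ∫⁻ u, ENNReal.ofReal (u ^ (-s)) ∂μ
      = ∫⁻ u, ENNReal.ofReal (Real.Gamma s) * ENNReal.ofReal (u ^ (-s)) ∂μ :=
        (lintegral_const_mul _ (by fun_prop)).symm
    _ = ∫⁻ u, (∫⁻ l in Ioi (0:ℝ), ENNReal.ofReal (l ^ (s-1) * Real.exp (-(u*l)))) ∂μ := by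
        refine lintegral_congr_ae ?_
        filter_upwards [hsupp] with u hu
        have hu0 : (0:ℝ) < u := hu
        rw [lint_gamma hs hu0, ← ENNReal.ofReal_mul (Real.Gamma_nonneg_of_nonneg hs.le)]
        congr 1
        rw [one_div, Real.inv_rpow hu0.le, ← Real.rpow_neg hu0.le, mul_comm]
    _ = ∫⁻ l in Ioi (0:ℝ), ∫⁻ u, ENNReal.ofReal (l ^ (s-1) * Real.exp (-(u*l))) ∂μ :=
        lintegral_lintegral_swap (by fun_prop)
    _ = ∫⁻ l in Ioi (0:ℝ), ENNReal.ofReal (l ^ (s-1) * Real.exp (-t * Φ l)) := by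
        refine setLIntegral_congr_fun measurableSet_Ioi (fun l hl => ?_)
        have hl0 : (0:ℝ) < l := hl
        calc ∫⁻ u, ENNReal.ofReal (l ^ (s-1) * Real.exp (-(u*l))) ∂μ
            = ∫⁻ u, ENNReal.ofReal (l ^ (s-1)) * ENNReal.ofReal (Real.exp (-l*u)) ∂μ := by
              refine lintegral_congr fun u => ?_
              rw [← ENNReal.ofReal_mul (Real.rpow_nonneg hl0.le _)]
              ring_nf
          _ = ENNReal.ofReal (l ^ (s-1)) * ∫⁻ u, ENNReal.ofReal (Real.exp (-l*u)) ∂μ :=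
              lintegral_const_mul _ (by fun_prop)
          _ = ENNReal.ofReal (l ^ (s-1)) * ENNReal.ofReal (Real.exp (-t * Φ l)) := by
              rw [hlap' l hl0]
          _ = ENNReal.ofReal (l ^ (s-1) * Real.exp (-t * Φ l)) :=
              (ENNReal.ofReal_mul (Real.rpow_nonneg hl0.le _)).symm

lemma lam_integral_bound
    (d : ℕ) (hd : 1 ≤ d) (Φ : ℝ → ℝ) (α C₁ lam₀ : ℝ)
    (hα : 0 < α) (hC₁ : 0 < C₁) (hlam₀ : 0 < lam₀)
    (hmono : MonotoneOn Φ (Set.Ioi (0:ℝ))) (hpos : ∀ l > (0:ℝ), 0 < Φ l)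
    (hlow : ∀ l : ℝ, 0 < l → l < lam₀ → C₁ * l ^ (α/2) ≤ Φ l)
    (hlim : Tendsto (fun l => Φ l / Real.log l) atTop atTop)
    (t₀ : ℝ) (ht₀ : 0 < t₀) :
    ∃ K > (0:ℝ), ∀ t ≥ t₀,
      ∫⁻ l in Ioi (0:ℝ), ENNReal.ofReal (l ^ ((d:ℝ)/2 - 1) * Real.exp (-t * Φ l))
        ≤ ENNReal.ofReal (K * t ^ (-(d:ℝ)/α)) := by
  have hdpos : (0:ℝ) < d := by exact_mod_cast hd
  have hd2 : (0:ℝ) < (d:ℝ)/2 := by positivity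
  set β : ℝ := (d:ℝ)/2 + 2 with hβ
  have hβpos : 0 < β := by positivity
  obtain ⟨A, hA⟩ := Filter.eventually_atTop.1 (hlim.eventually_ge_atTop (2*β/t₀))
  set lam₁ : ℝ := max A (max (lam₀+2) 2) with hlam₁
  have hlam₁A : A ≤ lam₁ := le_max_left _ _
  have hlam₁lam : lam₀ + 2 ≤ lam₁ := le_trans (le_max_left _ _) (le_max_right _ _)
  have hlam₁2 : 2 ≤ lam₁ := le_trans (le_max_right _ _) (le_max_right _ _)
  have hlam₁pos : 0 < lam₁ := by linarith
  have hlamlam₁ : lam₀ < lam₁ := by linarith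
  have hc₀ : 0 < Φ lam₀ := hpos _ hlam₀
  have hc₁ : 0 < Φ lam₁ := hpos _ hlam₁pos
  set c₀ : ℝ := Φ lam₀ with hc₀def
  set c₁ : ℝ := Φ lam₁ with hc₁def
  have hs' : 0 < (d:ℝ)/α := by positivity
  set M₀ : ℝ := Real.exp ((d:ℝ)/α * Real.log (2*((d:ℝ)/α)/c₀)) with hM₀
  set M₁ : ℝ := Real.exp ((d:ℝ)/α * Real.log (2*((d:ℝ)/α)/(c₁/2))) with hM₁
  have hM₀pos : 0 < M₀ := Real.exp_pos _
  have hM₁pos : 0 < M₁ := Real.exp_pos _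
  have hΓ : 0 < Real.Gamma ((d:ℝ)/α) := Real.Gamma_pos_of_pos hs'
  set K₁ : ℝ := C₁ ^ (-((d:ℝ)/α)) * (1/(α/2)) * Real.Gamma ((d:ℝ)/α) with hK₁
  set K₂ : ℝ := (lam₀ ^ ((d:ℝ)/2-1) + lam₁ ^ ((d:ℝ)/2-1)) * (lam₁ - lam₀) * M₀ with hK₂
  set K₃ : ℝ := ((lam₁/2) ^ (-2:ℝ)/2) * M₁ with hK₃
  have hK₁pos : 0 < K₁ := by
    have h1 : (0:ℝ) < C₁ ^ (-((d:ℝ)/α)) := Real.rpow_pos_of_pos hC₁ _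
    have h2 : (0:ℝ) < 1/(α/2) := by positivity
    positivity
  have hK₂pos : 0 < K₂ := by
    have h1 : (0:ℝ) < lam₀ ^ ((d:ℝ)/2-1) := Real.rpow_pos_of_pos hlam₀ _
    have h2 : (0:ℝ) < lam₁ ^ ((d:ℝ)/2-1) := Real.rpow_pos_of_pos hlam₁pos _
    have h3 : (0:ℝ) < lam₁ - lam₀ := by linarith
    positivity
  have hK₃pos : 0 < K₃ := by
    have h1 : (0:ℝ) < (lam₁/2) ^ (-2:ℝ) := Real.rpow_pos_of_pos (by positivity) _
    positivity
  refine ⟨K₁ + K₂ + K₃, by positivity, fun t htt => ?_⟩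
  have ht : 0 < t := lt_of_lt_of_le ht₀ htt
  set T : ℝ := t ^ (-(d:ℝ)/α) with hT
  have hTpos : 0 < T := Real.rpow_pos_of_pos ht _
  have hTalt : T = t ^ (-((d:ℝ)/α)) := by rw [hT, neg_div]
  -- split the domain
  rw [← Ioo_union_Ici_eq_Ioi hlam₁pos,
    lintegral_union measurableSet_Ici
      (Set.disjoint_left.2 fun x hx hx' => lt_irrefl x (lt_of_lt_of_le (show x < lam₁ from hx.2) (show lam₁ ≤ x from hx'))),
    ← Ioo_union_Ico_eq_Ioo hlam₀ hlamlam₁.le,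
    lintegral_union measurableSet_Ico
      (Set.disjoint_left.2 fun x hx hx' => lt_irrefl x (lt_of_lt_of_le (show x < lam₀ from hx.2) (show lam₀ ≤ x from hx'.1)))]
  have b1 : ∫⁻ l in Ioo (0:ℝ) lam₀, ENNReal.ofReal (l ^ ((d:ℝ)/2 - 1) * Real.exp (-t * Φ l))
      ≤ ENNReal.ofReal (K₁ * T) := by
    calc ∫⁻ l in Ioo (0:ℝ) lam₀, ENNReal.ofReal (l ^ ((d:ℝ)/2 - 1) * Real.exp (-t * Φ l))
        ≤ ∫⁻ l in Ioo (0:ℝ) lam₀,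
            ENNReal.ofReal (l ^ ((d:ℝ)/2 - 1) * Real.exp (-(t*C₁) * l ^ (α/2))) := by
          refine lintegral_mono_ae ?_
          filter_upwards [ae_restrict_mem measurableSet_Ioo] with l hl
          refine ENNReal.ofReal_le_ofReal (mul_le_mul_of_nonneg_left ?_
            (Real.rpow_nonneg hl.1.le _))
          refine Real.exp_le_exp.2 ?_
          have h := hlow l hl.1 hl.2
          nlinarith
      _ ≤ ∫⁻ l in Ioi (0:ℝ),
            ENNReal.ofReal (l ^ ((d:ℝ)/2 - 1) * Real.exp (-(t*C₁) * l ^ (α/2))) :=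
          lintegral_mono_set Ioo_subset_Ioi_self
      _ = ENNReal.ofReal ((t*C₁) ^ (-(((d:ℝ)/2-1) + 1) / (α/2)) * (1/(α/2))
            * Real.Gamma ((((d:ℝ)/2-1) + 1) / (α/2))) :=
          lint_gamma2 (by positivity) (by linarith) (by positivity)
      _ = ENNReal.ofReal (K₁ * T) := by
          have he : (((d:ℝ)/2-1) + 1) / (α/2) = (d:ℝ)/α := by
            field_simp
            ring
          have he2 : -(((d:ℝ)/2-1) + 1) / (α/2) = -((d:ℝ)/α) := by
            field_simp
            ring
          rw [he, he2, Real.mul_rpow ht.le hC₁.le]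
          congr 1
          rw [hK₁, hTalt]
          ring
  have b2 : ∫⁻ l in Ico lam₀ lam₁, ENNReal.ofReal (l ^ ((d:ℝ)/2 - 1) * Real.exp (-t * Φ l))
      ≤ ENNReal.ofReal (K₂ * T) := by
    calc ∫⁻ l in Ico lam₀ lam₁, ENNReal.ofReal (l ^ ((d:ℝ)/2 - 1) * Real.exp (-t * Φ l))
        ≤ ∫⁻ _ in Ico lam₀ lam₁,
            ENNReal.ofReal ((lam₀ ^ ((d:ℝ)/2-1) + lam₁ ^ ((d:ℝ)/2-1)) * Real.exp (-(c₀*t))) := by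
          refine lintegral_mono_ae ?_
          filter_upwards [ae_restrict_mem measurableSet_Ico] with l hl
          have hl0 : (0:ℝ) < l := lt_of_lt_of_le hlam₀ hl.1
          refine ENNReal.ofReal_le_ofReal (mul_le_mul ?_ ?_ (Real.exp_nonneg _) (by positivity))
          · rcases le_or_gt 0 ((d:ℝ)/2 - 1) with h | h
            · have := Real.rpow_le_rpow hl0.le hl.2.le h
              have h2 : (0:ℝ) ≤ lam₀ ^ ((d:ℝ)/2-1) := (Real.rpow_pos_of_pos hlam₀ _).le
              linarith
            · have := Real.rpow_le_rpow_of_nonpos hlam₀ hl.1 h.le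
              have h2 : (0:ℝ) ≤ lam₁ ^ ((d:ℝ)/2-1) := (Real.rpow_pos_of_pos hlam₁pos _).le
              linarith
          · refine Real.exp_le_exp.2 ?_
            have h := hmono (mem_Ioi.2 hlam₀) (mem_Ioi.2 hl0) hl.1
            nlinarith
      _ = ENNReal.ofReal ((lam₀ ^ ((d:ℝ)/2-1) + lam₁ ^ ((d:ℝ)/2-1)) * Real.exp (-(c₀*t)))
            * volume (Ico lam₀ lam₁) := setLIntegral_const _ _
      _ = ENNReal.ofReal (((lam₀ ^ ((d:ℝ)/2-1) + lam₁ ^ ((d:ℝ)/2-1)) * Real.exp (-(c₀*t)))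
            * (lam₁ - lam₀)) := by
          rw [Real.volume_Ico, ← ENNReal.ofReal_mul (by positivity)]
      _ ≤ ENNReal.ofReal (K₂ * T) := by
          refine ENNReal.ofReal_le_ofReal ?_
          have h := exp_le_rpow_aux hs' hc₀ ht
          rw [← hTalt] at h
          calc ((lam₀ ^ ((d:ℝ)/2-1) + lam₁ ^ ((d:ℝ)/2-1)) * Real.exp (-(c₀*t))) * (lam₁ - lam₀)
              = ((lam₀ ^ ((d:ℝ)/2-1) + lam₁ ^ ((d:ℝ)/2-1)) * (lam₁ - lam₀)) * Real.exp (-(c₀*t)) := by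
                ring
            _ ≤ ((lam₀ ^ ((d:ℝ)/2-1) + lam₁ ^ ((d:ℝ)/2-1)) * (lam₁ - lam₀)) * (M₀ * T) := by
                refine mul_le_mul_of_nonneg_left h ?_
                have h1 : (0:ℝ) < lam₀ ^ ((d:ℝ)/2-1) := Real.rpow_pos_of_pos hlam₀ _
                have h2 : (0:ℝ) < lam₁ ^ ((d:ℝ)/2-1) := Real.rpow_pos_of_pos hlam₁pos _
                nlinarith
            _ = K₂ * T := by rw [hK₂]; ring
  have b3 : ∫⁻ l in Ici lam₁, ENNReal.ofReal (l ^ ((d:ℝ)/2 - 1) * Real.exp (-t * Φ l))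
      ≤ ENNReal.ofReal (K₃ * T) := by
    calc ∫⁻ l in Ici lam₁, ENNReal.ofReal (l ^ ((d:ℝ)/2 - 1) * Real.exp (-t * Φ l))
        ≤ ∫⁻ l in Ici lam₁, ENNReal.ofReal (Real.exp (-(c₁/2*t))) * ENNReal.ofReal (l ^ (-3:ℝ)) := by
          refine lintegral_mono_ae ?_
          filter_upwards [ae_restrict_mem measurableSet_Ici] with l hl
          have hl' : lam₁ ≤ l := hl
          have hl0 : (0:ℝ) < l := lt_of_lt_of_le hlam₁pos hl'
          have hlog1 : 0 < Real.log l := Real.log_pos (by linarith)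
          have hlog : (2*β/t₀) * Real.log l ≤ Φ l := by
            have h := hA l (le_trans hlam₁A hl')
            calc (2*β/t₀) * Real.log l ≤ (Φ l / Real.log l) * Real.log l :=
                  mul_le_mul_of_nonneg_right h hlog1.le
              _ = Φ l := div_mul_cancel₀ _ hlog1.ne'
          have hΦ1 : c₁ ≤ Φ l := hmono (mem_Ioi.2 hlam₁pos) (mem_Ioi.2 hl0) hl'
          have key : c₁/2*t + β * Real.log l ≤ t * Φ l := by
            have e1 : t₀/2 * ((2*β/t₀) * Real.log l) = β * Real.log l := by
              field_simp
            have e2 : t₀/2 * ((2*β/t₀) * Real.log l) ≤ t₀/2 * Φ l :=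
              mul_le_mul_of_nonneg_left hlog (by positivity)
            have e3 : t₀/2 * Φ l ≤ t/2 * Φ l :=
              mul_le_mul_of_nonneg_right (by linarith) (hpos l hl0).le
            have e4 : t/2 * c₁ ≤ t/2 * Φ l := mul_le_mul_of_nonneg_left hΦ1 (by positivity)
            nlinarith
          rw [← ENNReal.ofReal_mul (Real.exp_nonneg _)]
          refine ENNReal.ofReal_le_ofReal ?_
          have hsplit : Real.exp (-(c₁/2*t)) * l ^ (-3:ℝ)
              = l ^ ((d:ℝ)/2-1) * (Real.exp (-(c₁/2*t)) * l ^ (-β)) := by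
            rw [Real.rpow_def_of_pos hl0 (-β), Real.rpow_def_of_pos hl0 (-3:ℝ),
              Real.rpow_def_of_pos hl0 ((d:ℝ)/2-1), ← Real.exp_add, ← Real.exp_add,
              ← Real.exp_add]
            congr 1
            rw [hβ]
            ring
          rw [hsplit]
          refine mul_le_mul_of_nonneg_left ?_ (Real.rpow_nonneg hl0.le _)
          rw [Real.rpow_def_of_pos hl0 (-β), ← Real.exp_add]
          refine Real.exp_le_exp.2 ?_
          nlinarith [key]
      _ = ENNReal.ofReal (Real.exp (-(c₁/2*t))) * ∫⁻ l in Ici lam₁, ENNReal.ofReal (l ^ (-3:ℝ)) :=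
          lintegral_const_mul _ (by fun_prop)
      _ ≤ ENNReal.ofReal (Real.exp (-(c₁/2*t))) * ∫⁻ l in Ioi (lam₁/2), ENNReal.ofReal (l ^ (-3:ℝ)) :=
          mul_le_mul_right (lintegral_mono_set fun x hx =>
            lt_of_lt_of_le (half_lt_self hlam₁pos) hx) _
      _ = ENNReal.ofReal (Real.exp (-(c₁/2*t))) * ENNReal.ofReal ((lam₁/2) ^ (-2:ℝ)/2) := by
          rw [lint_rpow_tail (by positivity)]
      _ ≤ ENNReal.ofReal (K₃ * T) := by
          rw [← ENNReal.ofReal_mul (Real.exp_nonneg _)]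
          refine ENNReal.ofReal_le_ofReal ?_
          have h := exp_le_rpow_aux hs' (by positivity : (0:ℝ) < c₁/2) ht
          rw [← hTalt] at h
          have h1 : (0:ℝ) < (lam₁/2) ^ (-2:ℝ) := Real.rpow_pos_of_pos (by positivity) _
          calc Real.exp (-(c₁/2*t)) * ((lam₁/2) ^ (-2:ℝ)/2)
              ≤ (M₁ * T) * ((lam₁/2) ^ (-2:ℝ)/2) := mul_le_mul_of_nonneg_right h (by positivity)
            _ = K₃ * T := by rw [hK₃]; ring
  calc (∫⁻ l in Ioo (0:ℝ) lam₀, ENNReal.ofReal (l ^ ((d:ℝ)/2 - 1) * Real.exp (-t * Φ l)))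
        + (∫⁻ l in Ico lam₀ lam₁, ENNReal.ofReal (l ^ ((d:ℝ)/2 - 1) * Real.exp (-t * Φ l)))
        + ∫⁻ l in Ici lam₁, ENNReal.ofReal (l ^ ((d:ℝ)/2 - 1) * Real.exp (-t * Φ l))
      ≤ ENNReal.ofReal (K₁ * T) + ENNReal.ofReal (K₂ * T) + ENNReal.ofReal (K₃ * T) := by
        gcongr
    _ = ENNReal.ofReal ((K₁ + K₂ + K₃) * T) := by
        rw [← ENNReal.ofReal_add (by positivity) (by positivity),
          ← ENNReal.ofReal_add (by positivity) (by positivity)]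
        congr 1
        ring


/-- For Φ as in the assumptions and a family of measures `η_t` on (0,∞)
with Laplace transform `e^{-tΦ(λ)}`, the subordinated kernel
`p_t(x) = ∫ (4πu)^{-d/2} e^{-|x|²/(4u)} η_t(du)` satisfies `p_t(x) ≤ C t^{-d/α}`
for all `x ∈ ℝ^d` and `t ≥ t₀`. -/
theorem stmt2 (d : ℕ) (hd : 1 ≤ d)
    (Φ : ℝ → ℝ) (α C₁ lam₀ : ℝ)
    (hα : 0 < α) (hα2 : α ≤ 2) (hC₁ : 0 < C₁) (hlam₀ : 0 < lam₀)
    (hmono : MonotoneOn Φ (Set.Ioi (0:ℝ))) (hpos : ∀ l > (0:ℝ), 0 < Φ l)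
    (hlow : ∀ l : ℝ, 0 < l → l < lam₀ → C₁ * l ^ (α/2) ≤ Φ l)
    (hlim : Tendsto (fun l => Φ l / Real.log l) atTop atTop)
    (η : ℝ → Measure ℝ)
    (hlap : ∀ t > (0:ℝ), ∀ l > (0:ℝ),
      ∫⁻ u in Set.Ioi (0:ℝ), ENNReal.ofReal (Real.exp (-l * u)) ∂(η t)
        = ENNReal.ofReal (Real.exp (-t * Φ l))) :
    ∀ t₀ > (0:ℝ), ∃ C > (0:ℝ), ∀ t ≥ t₀, ∀ x : Fin d → ℝ,
      ∫⁻ u in Set.Ioi (0:ℝ),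
          ENNReal.ofReal ((4 * Real.pi * u) ^ (-(d:ℝ)/2)
            * Real.exp (-(∑ k, (x k)^2) / (4*u))) ∂(η t)
        ≤ ENNReal.ofReal (C * t ^ (-(d:ℝ)/α)) := by
  intro t₀ ht₀
  have hdpos : (0:ℝ) < d := by exact_mod_cast hd
  have hd2 : 0 < (d:ℝ)/2 := by positivity
  have hΓ : 0 < Real.Gamma ((d:ℝ)/2) := Real.Gamma_pos_of_pos hd2
  obtain ⟨K, hK, hKb⟩ :=
    lam_integral_bound d hd Φ α C₁ lam₀ hα hC₁ hlam₀ hmono hpos hlow hlim t₀ ht₀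
  have hπ : (0:ℝ) < 4*Real.pi := by positivity
  set c4 : ℝ := (4*Real.pi) ^ (-(d:ℝ)/2) with hc4
  have hc4pos : 0 < c4 := Real.rpow_pos_of_pos hπ _
  refine ⟨c4 * (Real.Gamma ((d:ℝ)/2))⁻¹ * K, by positivity, fun t htt x => ?_⟩
  have ht : 0 < t := lt_of_lt_of_le ht₀ htt
  set μ : Measure ℝ := (η t).restrict (Ioi 0) with hμ
  have hmass : η t (Ioi 0) ≤ 1 := mass_le_one ht hpos (fun l hl => hlap t ht l hl)
  haveI : IsFiniteMeasure μ := by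
    constructor
    rw [hμ, Measure.restrict_apply_univ]
    exact hmass.trans_lt ENNReal.one_lt_top
  have hsupp : ∀ᵐ u ∂μ, u ∈ Ioi (0:ℝ) := ae_restrict_mem measurableSet_Ioi
  have hkey := key_swap (μ := μ) (s := (d:ℝ)/2) hd2 hsupp (fun l hl => hlap t ht l hl)
  set J := ∫⁻ u, ENNReal.ofReal (u ^ (-((d:ℝ)/2))) ∂μ with hJ
  have hJle : J ≤ (ENNReal.ofReal (Real.Gamma ((d:ℝ)/2)))⁻¹
      * ENNReal.ofReal (K * t ^ (-(d:ℝ)/α)) := by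
    have h1 := hKb t htt
    rw [← hkey] at h1
    calc J = (ENNReal.ofReal (Real.Gamma ((d:ℝ)/2)))⁻¹
          * (ENNReal.ofReal (Real.Gamma ((d:ℝ)/2)) * J) := by
          rw [← mul_assoc, ENNReal.inv_mul_cancel (ENNReal.ofReal_pos.2 hΓ).ne'
            ENNReal.ofReal_ne_top, one_mul]
      _ ≤ _ := mul_le_mul_right h1 _
  have hX : (0:ℝ) ≤ ∑ k, (x k)^2 := Finset.sum_nonneg fun k _ => sq_nonneg _
  calc ∫⁻ u, ENNReal.ofReal ((4 * Real.pi * u) ^ (-(d:ℝ)/2)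
          * Real.exp (-(∑ k, (x k)^2) / (4*u))) ∂μ
      ≤ ∫⁻ u, ENNReal.ofReal c4 * ENNReal.ofReal (u ^ (-((d:ℝ)/2))) ∂μ := by
        refine lintegral_mono_ae ?_
        filter_upwards [hsupp] with u hu
        have hu0 : (0:ℝ) < u := hu
        rw [← ENNReal.ofReal_mul hc4pos.le]
        refine ENNReal.ofReal_le_ofReal ?_
        have hexp : Real.exp (-(∑ k, (x k)^2) / (4*u)) ≤ 1 := by
          refine Real.exp_le_one_iff.2 ?_
          apply div_nonpos_of_nonpos_of_nonneg
          · exact neg_nonpos.2 hX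
          · linarith
        have hmul : (4 * Real.pi * u) ^ (-(d:ℝ)/2) = c4 * u ^ (-((d:ℝ)/2)) := by
          rw [hc4, show (-(d:ℝ)/2) = -((d:ℝ)/2) from neg_div _ _,
            ← Real.mul_rpow hπ.le hu0.le]
        calc (4 * Real.pi * u) ^ (-(d:ℝ)/2) * Real.exp (-(∑ k, (x k)^2) / (4*u))
            ≤ (4 * Real.pi * u) ^ (-(d:ℝ)/2) * 1 :=
              mul_le_mul_of_nonneg_left hexp (Real.rpow_nonneg (by positivity) _)
          _ = c4 * u ^ (-((d:ℝ)/2)) := by rw [mul_one, hmul]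
    _ = ENNReal.ofReal c4 * J := lintegral_const_mul _ (by fun_prop)
    _ ≤ ENNReal.ofReal c4 * ((ENNReal.ofReal (Real.Gamma ((d:ℝ)/2)))⁻¹
          * ENNReal.ofReal (K * t ^ (-(d:ℝ)/α))) := mul_le_mul_right hJle _
    _ = ENNReal.ofReal (c4 * (Real.Gamma ((d:ℝ)/2))⁻¹ * K * t ^ (-(d:ℝ)/α)) := by
        rw [← ENNReal.ofReal_inv_of_pos hΓ,
          ← ENNReal.ofReal_mul (by positivity),
          ← ENNReal.ofReal_mul hc4pos.le]
        congr 1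
        ring
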